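/- Let a, b be real numbers with 0 < a < 1 and 0 < b < 1. Then lim_{c→0⁺} Γ(c)·( e^{πic}·Γ(a−c)Γ(b−c)/(Γ(a)Γ(b)Γ(1−c)²)·₃F₂(c, c, c; 1+c−a, 1+c−b; 1) − 1 ) = πi − ψ(a) − ψ(b) + 2ψ(1). -/

import Mathlib

set_option autoImplicit false
set_option maxHeartbeats 1000000

open Complex Filter
open scoped Real Topology

/-- Pochhammer symbol `(a)_n = a(a+1)⋯(a+n−1)` for a complex number. -/
noncomputable def pochC (a : ℂ) (n : ℕ) : ℂ := ∏ k ∈ Finset.range n, (a + k)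

/-- Generalized hypergeometric series `₃F₂(a₁,a₂,a₃;b₁,b₂;x)`. -/
noncomputable def hyp3F2 (a₁ a₂ a₃ b₁ b₂ x : ℂ) : ℂ :=
  ∑' n : ℕ, (pochC a₁ n * pochC a₂ n * pochC a₃ n) /
    (pochC b₁ n * pochC b₂ n * (n.factorial : ℂ)) * x ^ n

/-- The digamma function `ψ(x) = Γ'(x)/Γ(x)` for real `x`. -/
noncomputable def digamma (x : ℝ) : ℝ := deriv Real.Gamma x / Real.Gamma x

/-! ### Auxiliary real Pochhammer machinery -/

noncomputable def pochR (x : ℝ) (n : ℕ) : ℝ := ∏ k ∈ Finset.range n, (x + k)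

lemma pochC_ofReal (x : ℝ) (n : ℕ) : pochC (x : ℂ) n = ((pochR x n : ℝ) : ℂ) := by
  unfold pochC pochR; push_cast; rfl

lemma pochR_pos {x : ℝ} (hx : 0 < x) (n : ℕ) : 0 < pochR x n := by
  unfold pochR; exact Finset.prod_pos fun k _ => by positivity

lemma pochR_mono {x y : ℝ} (hx : 0 ≤ x) (hxy : x ≤ y) (n : ℕ) : pochR x n ≤ pochR y n := by
  unfold pochR
  exact Finset.prod_le_prod (fun k _ => by positivity) (fun k _ => by linarith)

lemma pochR_succ' (x : ℝ) (n : ℕ) :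
    pochR x (n + 1) = (∏ k ∈ Finset.range n, (x + (k + 1))) * x := by
  unfold pochR
  rw [Finset.prod_range_succ' (fun k => (x + k : ℝ)) n]
  push_cast; rw [add_zero]

lemma pochR_scale {c c₀ : ℝ} (hc : 0 < c) (hcc : c ≤ c₀) (n : ℕ) :
    pochR c (n + 1) ≤ (c / c₀) * pochR c₀ (n + 1) := by
  have hc₀ : 0 < c₀ := lt_of_lt_of_le hc hcc
  rw [pochR_succ', pochR_succ']
  have h1 : (∏ k ∈ Finset.range n, (c + (k + 1 : ℝ))) ≤ ∏ k ∈ Finset.range n, (c₀ + (k + 1 : ℝ)) :=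
    Finset.prod_le_prod (fun k _ => by positivity) (fun k _ => by linarith)
  calc (∏ k ∈ Finset.range n, (c + (k + 1 : ℝ))) * c
      ≤ (∏ k ∈ Finset.range n, (c₀ + (k + 1 : ℝ))) * c := mul_le_mul_of_nonneg_right h1 hc.le
    _ = (c / c₀) * ((∏ k ∈ Finset.range n, (c₀ + (k + 1 : ℝ))) * c₀) := by field_simp

lemma GammaSeq_eq (s : ℝ) (n : ℕ) :
    Real.GammaSeq s n = (n : ℝ) ^ s * n.factorial / pochR s (n + 1) := rfl

lemma summable_V {a b c₀ : ℝ} (ha0 : 0 < a) (ha1 : a < 1) (hb0 : 0 < b) (hb1 : b < 1)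
    (hc0 : 0 < c₀) (hlt : a + b + 3 * c₀ < 2) :
    Summable (fun n =>
      pochR c₀ n ^ 3 / (pochR (1 - a) n * pochR (1 - b) n * (n.factorial : ℝ))) := by
  set V : ℕ → ℝ := fun n =>
    pochR c₀ n ^ 3 / (pochR (1 - a) n * pochR (1 - b) n * (n.factorial : ℝ)) with hV
  set q : ℝ := 3 - a - b - 3 * c₀ with hq
  have hq1 : 1 < q := by simp only [hq]; linarith
  set f : ℕ → ℝ := fun n =>
    Real.GammaSeq (1 - a) n * Real.GammaSeq (1 - b) n / (Real.GammaSeq c₀ n) ^ 3 with hf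
  have hΓc : (0:ℝ) < Real.Gamma c₀ := Real.Gamma_pos_of_pos hc0
  have hftend : Tendsto f atTop (𝓝 (Real.Gamma (1-a) * Real.Gamma (1-b) / Real.Gamma c₀ ^ 3)) :=
    (((Real.GammaSeq_tendsto_Gamma (1-a)).mul
      (Real.GammaSeq_tendsto_Gamma (1-b))).div
      ((Real.GammaSeq_tendsto_Gamma c₀).pow 3) (by positivity))
  set L : ℝ := Real.Gamma (1-a) * Real.Gamma (1-b) / Real.Gamma c₀ ^ 3 with hL
  have hkey : ∀ n : ℕ, 1 ≤ n → V (n+1) * (((n:ℝ)+1) * (n:ℝ) ^ (q-1)) = f n := by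
    intro n hn
    have hn0 : (0:ℝ) < n := by exact_mod_cast hn
    have hA : 0 < pochR (1-a) (n+1) := pochR_pos (by linarith) _
    have hB : 0 < pochR (1-b) (n+1) := pochR_pos (by linarith) _
    have hC : 0 < pochR c₀ (n+1) := pochR_pos hc0 _
    have hfact : (0:ℝ) < n.factorial := by exact_mod_cast n.factorial_pos
    have e1 : (n:ℝ) ^ (1-a) * (n:ℝ) ^ (1-b) = (n:ℝ) ^ (q-1) * ((n:ℝ) ^ c₀) ^ 3 := by
      rw [← Real.rpow_natCast ((n:ℝ) ^ c₀) 3, ← Real.rpow_mul hn0.le,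
        ← Real.rpow_add hn0, ← Real.rpow_add hn0]
      congr 1
      push_cast
      ring
    simp only [hV, hf, GammaSeq_eq]
    rw [Nat.factorial_succ]
    push_cast
    field_simp
    linear_combination (-1 : ℝ) * e1
  have hL0 : 0 < L := by
    have h1 : (0:ℝ) < Real.Gamma (1-a) := Real.Gamma_pos_of_pos (by linarith)
    have h2 : (0:ℝ) < Real.Gamma (1-b) := Real.Gamma_pos_of_pos (by linarith)
    positivity
  have hev : ∀ᶠ n in atTop, f n ≤ L + 1 := hftend.eventually_le_const (by linarith)
  have hbound : ∀ᶠ n in atTop, V (n+1) ≤ (L+1) * (((n:ℝ) ^ q)⁻¹) := by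
    filter_upwards [hev, eventually_ge_atTop 1] with n hfn hn1
    have hn0 : (0:ℝ) < n := by exact_mod_cast hn1
    have hq0 : (0:ℝ) < (n:ℝ) ^ (q-1) := Real.rpow_pos_of_pos hn0 _
    have hpos : 0 < ((n:ℝ)+1) * (n:ℝ) ^ (q-1) := by positivity
    have hVn : V (n+1) = f n / (((n:ℝ)+1) * (n:ℝ)^(q-1)) := by
      rw [← hkey n hn1]; field_simp
    have hmul : (n:ℝ) * (n:ℝ) ^ (q-1) = (n:ℝ) ^ q := by
      rw [Real.rpow_sub hn0, Real.rpow_one]; field_simp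
    have h1 : (n:ℝ) ^ q ≤ ((n:ℝ)+1) * (n:ℝ) ^ (q-1) := by nlinarith
    rw [hVn, ← div_eq_mul_inv]
    exact div_le_div₀ (by linarith) hfn (Real.rpow_pos_of_pos hn0 q) h1
  have hsum1 : Summable (fun n => V (n+1)) := by
    apply summable_of_isBigO_nat (Real.summable_nat_rpow_inv.mpr hq1)
    rw [Asymptotics.isBigO_iff]
    refine ⟨L+1, ?_⟩
    filter_upwards [hbound] with n hb
    have hC := pochR_pos hc0 (n+1)
    have hA : 0 < pochR (1-a) (n+1) := pochR_pos (by linarith) _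
    have hB : 0 < pochR (1-b) (n+1) := pochR_pos (by linarith) _
    have hfact : (0:ℝ) < (n+1).factorial := by exact_mod_cast (n+1).factorial_pos
    have hV0 : 0 ≤ V (n+1) := by
      have h5 : 0 < pochR (1-a) (n+1) * pochR (1-b) (n+1) * ((n+1).factorial : ℝ) := by
        positivity
      exact le_of_lt (div_pos (by positivity) h5)
    rw [Real.norm_eq_abs, Real.norm_eq_abs, _root_.abs_of_nonneg hV0,
      _root_.abs_of_nonneg (by positivity : (0:ℝ) ≤ ((n:ℝ) ^ q)⁻¹)]
    exact hb
  exact (summable_nat_add_iff 1).mp hsum1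

lemma tail_est {a b c₀ : ℝ} (ha1 : a < 1) (hb1 : b < 1) (hc0 : 0 < c₀)
    (hVs : Summable (fun n =>
      pochR c₀ n ^ 3 / (pochR (1 - a) n * pochR (1 - b) n * (n.factorial : ℝ))))
    {c : ℝ} (hc : 0 < c) (hcc : c ≤ c₀) :
    Summable (fun n =>
        pochR c n ^ 3 / (pochR (1 + c - a) n * pochR (1 + c - b) n * (n.factorial : ℝ)))
      ∧ |(∑' n : ℕ, pochR c n ^ 3 /
            (pochR (1 + c - a) n * pochR (1 + c - b) n * (n.factorial : ℝ))) - 1|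
        ≤ (c / c₀) ^ 3 *
          ∑' n : ℕ, pochR c₀ n ^ 3 / (pochR (1 - a) n * pochR (1 - b) n * (n.factorial : ℝ)) := by
  set t : ℕ → ℝ := fun n =>
    pochR c n ^ 3 / (pochR (1 + c - a) n * pochR (1 + c - b) n * (n.factorial : ℝ)) with ht
  set V : ℕ → ℝ := fun n =>
    pochR c₀ n ^ 3 / (pochR (1 - a) n * pochR (1 - b) n * (n.factorial : ℝ)) with hV
  have hr01 : 0 < c / c₀ := div_pos hc hc0
  have hr1 : c / c₀ ≤ 1 := (div_le_one hc0).mpr hcc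
  have htnonneg : ∀ n, 0 ≤ t n := by
    intro n
    have h1 := pochR_pos hc n
    have h2 := pochR_pos (by linarith : (0:ℝ) < 1 + c - a) n
    have h3 := pochR_pos (by linarith : (0:ℝ) < 1 + c - b) n
    have h4 : (0:ℝ) < n.factorial := by exact_mod_cast n.factorial_pos
    exact le_of_lt (div_pos (by positivity) (by positivity))
  have hVnonneg : ∀ n, 0 ≤ V n := by
    intro n
    have h1 := pochR_pos hc0 n
    have h2 := pochR_pos (by linarith : (0:ℝ) < 1 - a) n
    have h3 := pochR_pos (by linarith : (0:ℝ) < 1 - b) n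
    have h4 : (0:ℝ) < n.factorial := by exact_mod_cast n.factorial_pos
    exact le_of_lt (div_pos (by positivity) (by positivity))
  have hterm : ∀ n : ℕ, t (n + 1) ≤ (c / c₀) ^ 3 * V (n + 1) := by
    intro n
    have hA : 0 < pochR (1 - a) (n+1) := pochR_pos (by linarith) _
    have hB : 0 < pochR (1 - b) (n+1) := pochR_pos (by linarith) _
    have hA' : pochR (1 - a) (n+1) ≤ pochR (1 + c - a) (n+1) :=
      pochR_mono (by linarith) (by linarith) _
    have hB' : pochR (1 - b) (n+1) ≤ pochR (1 + c - b) (n+1) :=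
      pochR_mono (by linarith) (by linarith) _
    have hC : 0 < pochR c₀ (n+1) := pochR_pos hc0 _
    have hfact : (0:ℝ) < (n+1).factorial := by exact_mod_cast (n+1).factorial_pos
    have hnum : pochR c (n+1) ^ 3 ≤ ((c/c₀) * pochR c₀ (n+1)) ^ 3 :=
      pow_le_pow_left₀ (pochR_pos hc _).le (pochR_scale hc hcc n) 3
    have hstep : t (n+1) ≤ ((c/c₀) * pochR c₀ (n+1)) ^ 3 /
        (pochR (1 - a) (n+1) * pochR (1 - b) (n+1) * ((n+1).factorial : ℝ)) := by
      apply div_le_div₀ (pow_nonneg (mul_nonneg hr01.le hC.le) 3) hnum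
        (mul_pos (mul_pos hA hB) hfact)
      have := mul_le_mul hA' hB' hB.le (pochR_pos (by linarith : (0:ℝ) < 1 + c - a) (n+1)).le
      exact mul_le_mul_of_nonneg_right this hfact.le
    calc t (n+1) ≤ _ := hstep
      _ = (c/c₀) ^ 3 * V (n+1) := by rw [mul_pow]; ring
  have hsum_shift : Summable (fun n => t (n + 1)) := by
    apply Summable.of_nonneg_of_le (fun n => htnonneg (n+1))
      (fun n => le_trans (hterm n) ?_) ((summable_nat_add_iff 1).mpr hVs)
    calc (c/c₀)^3 * V (n+1) ≤ 1 * V (n+1) := by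
          apply mul_le_mul_of_nonneg_right _ (hVnonneg (n+1))
          calc (c/c₀)^3 ≤ 1^3 := pow_le_pow_left₀ hr01.le hr1 3
            _ = 1 := one_pow 3
      _ = V (n+1) := one_mul _
  have hsumt : Summable t := (summable_nat_add_iff 1).mp hsum_shift
  have ht0 : t 0 = 1 := by simp [ht, pochR]
  have htsum : ∑' n, t n = 1 + ∑' n, t (n + 1) := by
    rw [Summable.tsum_eq_zero_add hsumt, ht0]
  have htail : ∑' n, t (n + 1) ≤ (c/c₀)^3 * ∑' n, V (n + 1) := by
    rw [← tsum_mul_left]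
    exact Summable.tsum_le_tsum hterm hsum_shift (((summable_nat_add_iff 1).mpr hVs).mul_left _)
  have hVshift : ∑' n, V (n + 1) ≤ ∑' n, V n := by
    rw [Summable.tsum_eq_zero_add hVs]
    have : 0 ≤ V 0 := hVnonneg 0
    linarith
  have htail_nonneg : 0 ≤ ∑' n, t (n + 1) := tsum_nonneg fun n => htnonneg (n+1)
  refine ⟨hsumt, ?_⟩
  rw [htsum, add_sub_cancel_left, _root_.abs_of_nonneg htail_nonneg]
  calc ∑' n, t (n+1) ≤ (c/c₀)^3 * ∑' n, V (n + 1) := htail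
    _ ≤ (c/c₀)^3 * ∑' n, V n := mul_le_mul_of_nonneg_left hVshift (by positivity)

lemma hyp_real (a b c : ℝ) :
    hyp3F2 (c : ℂ) (c : ℂ) (c : ℂ) (1 + (c : ℂ) - a) (1 + (c : ℂ) - b) 1
      = ((∑' n : ℕ, pochR c n ^ 3 /
          (pochR (1 + c - a) n * pochR (1 + c - b) n * (n.factorial : ℝ)) : ℝ) : ℂ) := by
  unfold hyp3F2
  rw [Complex.ofReal_tsum]
  congr 1; funext n
  have h1 : (1 + (c:ℂ) - a) = ((1 + c - a : ℝ) : ℂ) := by push_cast; ring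
  have h2 : (1 + (c:ℂ) - b) = ((1 + c - b : ℝ) : ℂ) := by push_cast; ring
  rw [h1, h2, pochC_ofReal, pochC_ofReal, pochC_ofReal, one_pow, mul_one]
  push_cast
  ring

lemma deriv_Gamma_real (x : ℝ) (hx : 0 < x) :
    HasDerivAt Complex.Gamma ((deriv Real.Gamma x : ℝ) : ℂ) (x : ℂ) := by
  have hx' : ∀ m : ℕ, (x : ℂ) ≠ -m := by
    intro m
    rw [← Complex.ofReal_natCast, ← Complex.ofReal_neg, Ne, Complex.ofReal_inj]
    have : (0:ℝ) ≤ m := Nat.cast_nonneg m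
    intro h; linarith
  have hd : HasDerivAt Complex.Gamma (deriv Complex.Gamma (x : ℂ)) (x : ℂ) :=
    (Complex.differentiableAt_Gamma _ hx').hasDerivAt
  set d := deriv Complex.Gamma (x : ℂ) with hdd
  have hre : HasDerivAt Real.Gamma d.re x := by
    have heq : Real.Gamma = fun y : ℝ => (Complex.Gamma (y:ℂ)).re := by
      funext y; rw [Complex.Gamma_ofReal, Complex.ofReal_re]
    rw [heq]
    exact hd.real_of_complex
  have him : d = ((d.re : ℝ) : ℂ) := by
    have h1 : HasDerivAt (fun y : ℝ => Complex.Gamma (y : ℂ)) d x := hd.comp_ofReal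
    have h2 : HasDerivAt (fun y : ℝ => ((Real.Gamma y : ℝ) : ℂ)) ((d.re : ℝ) : ℂ) x :=
      hre.ofReal_comp
    have h3 : (fun y : ℝ => Complex.Gamma (y : ℂ)) = fun y : ℝ => ((Real.Gamma y : ℝ) : ℂ) := by
      funext y; rw [Complex.Gamma_ofReal]
    rw [h3] at h1
    exact h1.unique h2
  rw [hre.deriv, ← him]
  exact hd

lemma hasDerivAt_G (a b : ℝ) (ha0 : 0 < a) (hb0 : 0 < b) :
    HasDerivAt (fun z : ℂ => Complex.exp ((π:ℂ) * I * z) * Complex.Gamma ((a:ℂ) - z) *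
        Complex.Gamma ((b:ℂ) - z) /
        (Complex.Gamma (a:ℂ) * Complex.Gamma (b:ℂ) * Complex.Gamma (1 - z) ^ 2))
      ((π:ℂ) * I - (digamma a : ℝ) - (digamma b : ℝ) + 2 * (digamma 1 : ℝ)) 0 := by
  have hΓa := deriv_Gamma_real a ha0
  have hΓb := deriv_Gamma_real b hb0
  have hΓ1 : HasDerivAt Complex.Gamma ((deriv Real.Gamma 1 : ℝ) : ℂ) 1 := by
    simpa using deriv_Gamma_real 1 one_pos
  set da := deriv Real.Gamma a with hda'
  set db := deriv Real.Gamma b with hdb'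
  set d1 := deriv Real.Gamma 1 with hd1'
  have hGa0 : Real.Gamma a ≠ 0 := (Real.Gamma_pos_of_pos ha0).ne'
  have hGb0 : Real.Gamma b ≠ 0 := (Real.Gamma_pos_of_pos hb0).ne'
  have hGaC : Complex.Gamma (a:ℂ) = ((Real.Gamma a : ℝ) : ℂ) := Complex.Gamma_ofReal a
  have hGbC : Complex.Gamma (b:ℂ) = ((Real.Gamma b : ℝ) : ℂ) := Complex.Gamma_ofReal b
  have hGaC0 : Complex.Gamma (a:ℂ) ≠ 0 := by rw [hGaC]; exact_mod_cast hGa0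
  have hGbC0 : Complex.Gamma (b:ℂ) ≠ 0 := by rw [hGbC]; exact_mod_cast hGb0
  have e1 : HasDerivAt (fun z : ℂ => Complex.exp ((π:ℂ) * I * z)) ((π:ℂ)*I) 0 := by
    have h0 : HasDerivAt (fun z : ℂ => (π:ℂ) * I * z) ((π:ℂ)*I) 0 := by
      simpa using (hasDerivAt_id (0:ℂ)).const_mul ((π:ℂ)*I)
    have := (Complex.hasDerivAt_exp ((π:ℂ)*I*0)).comp 0 h0
    simpa [Function.comp_def] using this
  have hsa : HasDerivAt (fun z : ℂ => (a:ℂ) - z) (-1) 0 := by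
    simpa using (hasDerivAt_id (0:ℂ)).const_sub (a:ℂ)
  have hsb : HasDerivAt (fun z : ℂ => (b:ℂ) - z) (-1) 0 := by
    simpa using (hasDerivAt_id (0:ℂ)).const_sub (b:ℂ)
  have hs1 : HasDerivAt (fun z : ℂ => 1 - z) (-1) 0 := by
    simpa using (hasDerivAt_id (0:ℂ)).const_sub 1
  have e2 : HasDerivAt (fun z : ℂ => Complex.Gamma ((a:ℂ) - z)) (-((da:ℝ):ℂ)) 0 := by
    have hΓa' : HasDerivAt Complex.Gamma ((da:ℝ):ℂ) ((fun z : ℂ => (a:ℂ) - z) 0) := by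
      simpa using hΓa
    simpa [Function.comp_def] using hΓa'.comp 0 hsa
  have e3 : HasDerivAt (fun z : ℂ => Complex.Gamma ((b:ℂ) - z)) (-((db:ℝ):ℂ)) 0 := by
    have hΓb' : HasDerivAt Complex.Gamma ((db:ℝ):ℂ) ((fun z : ℂ => (b:ℂ) - z) 0) := by
      simpa using hΓb
    simpa [Function.comp_def] using hΓb'.comp 0 hsb
  have e4 : HasDerivAt (fun z : ℂ => Complex.Gamma (1 - z)) (-((d1:ℝ):ℂ)) 0 := by
    have hΓ1' : HasDerivAt Complex.Gamma ((d1:ℝ):ℂ) ((fun z : ℂ => 1 - z) 0) := by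
      simpa using hΓ1
    simpa [Function.comp_def] using hΓ1'.comp 0 hs1
  have e5 : HasDerivAt (fun z : ℂ =>
      Complex.Gamma (a:ℂ) * Complex.Gamma (b:ℂ) * Complex.Gamma (1 - z) ^ 2)
      (Complex.Gamma (a:ℂ) * Complex.Gamma (b:ℂ) *
        (2 * Complex.Gamma (1 - (0:ℂ)) ^ 1 * (-((d1:ℝ):ℂ)))) 0 :=
    (e4.pow 2).const_mul _
  have e123 := (e1.mul e2).mul e3
  have hden0 : Complex.Gamma (a:ℂ) * Complex.Gamma (b:ℂ) * Complex.Gamma (1 - (0:ℂ)) ^ 2 ≠ 0 := by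
    rw [sub_zero, Complex.Gamma_one]
    simpa using mul_ne_zero hGaC0 hGbC0
  have e6 := e123.div e5 hden0
  refine HasDerivAt.congr_deriv e6 ?_
  symm
  simp only [Pi.mul_apply, sub_zero, Complex.Gamma_one, Complex.exp_zero, mul_zero, pow_one, one_pow,
    one_mul, mul_one]
  have hca : (_root_.digamma a : ℂ) = ((da:ℝ):ℂ) / ((Real.Gamma a : ℝ):ℂ) := by
    unfold _root_.digamma
    rw [← hda', Complex.ofReal_div]
  have hcb : (_root_.digamma b : ℂ) = ((db:ℝ):ℂ) / ((Real.Gamma b : ℝ):ℂ) := by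
    unfold _root_.digamma
    rw [← hdb', Complex.ofReal_div]
  have hc1 : (_root_.digamma 1 : ℂ) = ((d1:ℝ):ℂ) := by
    unfold _root_.digamma
    rw [← hd1', Real.Gamma_one, div_one]
  rw [hca, hcb, hc1, hGaC, hGbC]
  have hGa0' : ((Real.Gamma a : ℝ):ℂ) ≠ 0 := by exact_mod_cast hGa0
  have hGb0' : ((Real.Gamma b : ℝ):ℂ) ≠ 0 := by exact_mod_cast hGb0
  field_simp
  ring

theorem stmt2 (a b : ℝ) (ha0 : 0 < a) (ha1 : a < 1) (hb0 : 0 < b) (hb1 : b < 1) :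
    Tendsto
      (fun c : ℝ =>
        Complex.Gamma (c : ℂ) *
          (Complex.exp ((π : ℂ) * I * c) * Complex.Gamma ((a : ℂ) - c) *
            Complex.Gamma ((b : ℂ) - c) /
            (Complex.Gamma (a : ℂ) * Complex.Gamma (b : ℂ) *
              Complex.Gamma (1 - (c : ℂ)) ^ 2) *
            hyp3F2 c c c (1 + (c : ℂ) - a) (1 + (c : ℂ) - b) 1 - 1))
      (𝓝[>] (0 : ℝ))
      (𝓝 ((π : ℂ) * I - (digamma a : ℝ) - (digamma b : ℝ) + 2 * (digamma 1 : ℝ))) := by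
  set D : ℂ := (π : ℂ) * I - (digamma a : ℝ) - (digamma b : ℝ) + 2 * (digamma 1 : ℝ) with hD
  set c₀ : ℝ := (2 - a - b) / 6 with hc₀def
  have hc₀ : 0 < c₀ := by simp only [hc₀def]; linarith
  have hlt : a + b + 3 * c₀ < 2 := by simp only [hc₀def]; linarith
  have hVs := summable_V ha0 ha1 hb0 hb1 hc₀ hlt
  set S : ℝ := ∑' n : ℕ,
    pochR c₀ n ^ 3 / (pochR (1-a) n * pochR (1-b) n * (n.factorial:ℝ)) with hS
  have hS0 : 0 ≤ S := by
    apply tsum_nonneg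
    intro n
    have h1 := pochR_pos hc₀ n
    have h2 := pochR_pos (by linarith : (0:ℝ) < 1 - a) n
    have h3 := pochR_pos (by linarith : (0:ℝ) < 1 - b) n
    have h4 : (0:ℝ) < n.factorial := by exact_mod_cast n.factorial_pos
    exact le_of_lt (div_pos (by positivity) (by positivity))
  set G : ℂ → ℂ := fun z => Complex.exp ((π:ℂ) * I * z) * Complex.Gamma ((a:ℂ) - z) *
      Complex.Gamma ((b:ℂ) - z) /
      (Complex.Gamma (a:ℂ) * Complex.Gamma (b:ℂ) * Complex.Gamma (1 - z) ^ 2) with hGdef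
  set H : ℝ → ℂ := fun c => hyp3F2 (c:ℂ) (c:ℂ) (c:ℂ) (1 + (c:ℂ) - a) (1 + (c:ℂ) - b) 1 with hHdef
  have hG : HasDerivAt G D 0 := hasDerivAt_G a b ha0 hb0
  have hGaC0 : Complex.Gamma (a:ℂ) ≠ 0 := by
    rw [Complex.Gamma_ofReal]
    exact_mod_cast (Real.Gamma_pos_of_pos ha0).ne'
  have hGbC0 : Complex.Gamma (b:ℂ) ≠ 0 := by
    rw [Complex.Gamma_ofReal]
    exact_mod_cast (Real.Gamma_pos_of_pos hb0).ne'
  have hG0 : G 0 = 1 := by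
    simp only [hGdef, mul_zero, Complex.exp_zero, sub_zero, Complex.Gamma_one, one_pow,
      one_mul, mul_one]
    exact div_self (mul_ne_zero hGaC0 hGbC0)
  -- bound on the hypergeometric tail
  have hH : ∀ c : ℝ, 0 < c → c ≤ c₀ → ‖H c - 1‖ ≤ (c/c₀)^3 * S := by
    intro c hc hcc
    have hest := (tail_est ha1 hb1 hc₀ hVs hc hcc).2
    rw [hHdef]
    simp only
    rw [hyp_real a b c, ← Complex.ofReal_one, ← Complex.ofReal_sub, Complex.norm_real,
      Real.norm_eq_abs]
    exact hest
  -- continuity facts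
  have hofReal : Tendsto (fun c : ℝ => (c : ℂ)) (𝓝[>] (0:ℝ)) (𝓝 0) := by
    apply Tendsto.mono_left _ nhdsWithin_le_nhds
    simpa using Complex.continuous_ofReal.tendsto 0
  have hGcont : Tendsto (fun c : ℝ => G (c:ℂ)) (𝓝[>] (0:ℝ)) (𝓝 1) := by
    have := hG.continuousAt.tendsto.comp hofReal
    rwa [hG0] at this
  have hΓ1cont : Tendsto (fun c : ℝ => Complex.Gamma ((c:ℂ) + 1)) (𝓝[>] (0:ℝ)) (𝓝 1) := by
    have hd1 : ContinuousAt Complex.Gamma 1 := by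
      refine (Complex.differentiableAt_Gamma 1 fun m => ?_).continuousAt
      intro h
      have h2 : (1:ℝ) = -(m:ℝ) := by exact_mod_cast h
      have : (0:ℝ) ≤ m := Nat.cast_nonneg m
      linarith
    have h2 : Tendsto (fun c : ℝ => ((c:ℂ) + 1)) (𝓝[>] (0:ℝ)) (𝓝 1) := by
      have := hofReal.add (tendsto_const_nhds :
        Tendsto (fun _ : ℝ => (1:ℂ)) (𝓝[>] (0:ℝ)) (𝓝 1))
      simpa using this
    have := hd1.tendsto.comp h2
    rwa [Complex.Gamma_one] at this
  have hGbound : ∀ᶠ (c : ℝ) in 𝓝[>] (0:ℝ), ‖G (c:ℂ)‖ ≤ 2 := by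
    have := hGcont.norm
    rw [norm_one] at this
    exact this.eventually_le_const (by norm_num)
  have hΓbound : ∀ᶠ (c : ℝ) in 𝓝[>] (0:ℝ), ‖Complex.Gamma ((c:ℂ)+1)‖ ≤ 2 := by
    have := hΓ1cont.norm
    rw [norm_one] at this
    exact this.eventually_le_const (by norm_num)
  -- Part A : Γ(c) G(c) (H c - 1) → 0
  have hA : Tendsto (fun c : ℝ => Complex.Gamma (c:ℂ) * G (c:ℂ) * (H c - 1))
      (𝓝[>] (0:ℝ)) (𝓝 0) := by
    apply squeeze_zero_norm' (a := fun c : ℝ => 4 * S / c₀^3 * c^2)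
    · filter_upwards [hGbound, hΓbound, Ioc_mem_nhdsGT_of_mem ⟨le_refl (0:ℝ), hc₀⟩]
        with c hGb hΓb hmem
      obtain ⟨hc, hcc⟩ := hmem
      have hcne : (c:ℂ) ≠ 0 := by exact_mod_cast hc.ne'
      have hΓeq : Complex.Gamma (c:ℂ) = Complex.Gamma ((c:ℂ)+1) / (c:ℂ) := by
        rw [Complex.Gamma_add_one _ hcne]
        field_simp
      have hΓnorm : ‖Complex.Gamma (c:ℂ)‖ ≤ 2 / c := by
        rw [hΓeq, norm_div, Complex.norm_real, Real.norm_eq_abs, _root_.abs_of_pos hc]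
        exact div_le_div₀ (by norm_num) hΓb hc (le_refl c)
      have hHb := hH c hc hcc
      calc ‖Complex.Gamma (c:ℂ) * G (c:ℂ) * (H c - 1)‖
          = ‖Complex.Gamma (c:ℂ)‖ * ‖G (c:ℂ)‖ * ‖H c - 1‖ := by rw [norm_mul, norm_mul]
        _ ≤ (2/c) * 2 * ((c/c₀)^3 * S) := by
            have h1 : ‖Complex.Gamma (c:ℂ)‖ * ‖G (c:ℂ)‖ ≤ (2/c) * 2 :=
              mul_le_mul hΓnorm hGb (norm_nonneg _) (div_nonneg (by norm_num) hc.le)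
            exact mul_le_mul h1 hHb (norm_nonneg _)
              (mul_nonneg (div_nonneg (by norm_num) hc.le) (by norm_num))
        _ = 4 * S / c₀^3 * c^2 := by field_simp; ring
    · have : Tendsto (fun c : ℝ => 4 * S / c₀^3 * c^2) (𝓝 (0:ℝ)) (𝓝 (4 * S / c₀^3 * 0^2)) :=
        (continuous_const.mul (continuous_pow 2)).tendsto 0
      simp only [ne_eq, OfNat.ofNat_ne_zero, not_false_eq_true, zero_pow, mul_zero] at this
      exact this.mono_left nhdsWithin_le_nhds
  -- Part B : Γ(c)(G(c) - 1) → D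
  have hGR : HasDerivAt (fun c : ℝ => G (c:ℂ)) D 0 := hG.comp_ofReal
  have hslope : Tendsto (slope (fun c : ℝ => G (c:ℂ)) 0) (𝓝[>] (0:ℝ)) (𝓝 D) := by
    have := hasDerivAt_iff_tendsto_slope.mp hGR
    exact this.mono_left (nhdsWithin_mono 0 fun x hx => ne_of_gt hx)
  have hB : Tendsto (fun c : ℝ => Complex.Gamma (c:ℂ) * (G (c:ℂ) - 1)) (𝓝[>] (0:ℝ)) (𝓝 D) := by
    have h := hΓ1cont.mul hslope
    rw [one_mul] at h
    apply h.congr'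
    filter_upwards [self_mem_nhdsWithin] with c hc
    have hc0 : (0:ℝ) < c := hc
    have hcne : (c:ℂ) ≠ 0 := by exact_mod_cast hc0.ne'
    rw [slope_def_module, Complex.ofReal_zero, hG0, sub_zero, Complex.real_smul, Complex.Gamma_add_one _ hcne,
      Complex.ofReal_inv]
    field_simp
  -- combine
  have hfinal := hA.add hB
  rw [zero_add] at hfinal
  have heq : (fun c : ℝ => Complex.Gamma (c:ℂ) * G (c:ℂ) * (H c - 1)
      + Complex.Gamma (c:ℂ) * (G (c:ℂ) - 1))
      = fun c : ℝ => Complex.Gamma (c:ℂ) * (G (c:ℂ) * H c - 1) := by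
    funext c; ring
  rw [heq] at hfinal
  exact hfinal
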